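/- (Theorem 4(a), single-individual form.) Consider the Binomial regression model f(k, z; β₀) = C(K,k) g(z;β₀)^k (1−g(z;β₀))^{K−k} with K ≥ 2 capture occasions and logistic link g(z;β) = exp(βᵀz)/(1+exp(βᵀz)), the one-inflated model h(·,z;β₀,ω₀) with true inflation parameter ω₀ ∈ (0,1], and the logistic non-missingness model π(x,k;η₀) = exp((1,xᵀ,k)η₀)/(1+exp((1,xᵀ,k)η₀)). Let Z = (1, Xᵀ, Yᵀ)ᵀ be a random covariate, let D given Z = z have probability mass function h(·, z; β₀, ω₀), and let R satisfy P(R = 1 | X = x, Y = y, D = k) = π(x, k; η₀) (missing at random). Set φ(z; β₀, η₀) = Σ_{k=1}^∞ π(x,k;η₀) f(k,z;β₀). Then E[ R·I(D>0)·π(X,1;η₀)/φ(Z;β₀,η₀) − R·I(D=1)/f(1, Z; β₀) ] ≤ 0, with equality if and only if ω₀ = 1. -/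

import Mathlib

open MeasureTheory ProbabilityTheory

/-- The standard logistic function. -/
noncomputable def logistic (t : ℝ) : ℝ := Real.exp t / (1 + Real.exp t)

/-- The logistic capture-probability link `g(z; β)`. -/
noncomputable def gLink {n : ℕ} (β z : Fin n → ℝ) : ℝ := logistic (∑ i, β i * z i)

/-- The Binomial regression model `f(k, z; β) = C(K,k) g(z;β)^k (1-g(z;β))^{K-k}`. -/
noncomputable def fBin {n : ℕ} (K : ℕ) (β z : Fin n → ℝ) (k : ℕ) : ℝ :=
  (K.choose k : ℝ) * gLink β z ^ k * (1 - gLink β z) ^ (K - k)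

/-- The one-inflated model with inflation parameter `ω` built from a pmf `f` on `ℕ`. -/
noncomputable def oneInflated (f : ℕ → ℝ) (ω : ℝ) : ℕ → ℝ := fun k =>
  if k = 0 then f 0
  else if k = 1 then (1 - ω) * (1 - f 0) + ω * f 1
  else ω * f k

/-- The logistic non-missingness model `π(x, k; η) = logit⁻¹((1, xᵀ, k) η)`. -/
noncomputable def piLog {p : ℕ} (η : Fin (p + 2) → ℝ) (x : Fin p → ℝ) (k : ℕ) : ℝ :=
  logistic (∑ j, η j * (Fin.cons (1 : ℝ) (Fin.snoc x (k : ℝ)) : Fin (p + 2) → ℝ) j)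

namespace ScoreAux

lemma one_add_exp_pos (t : ℝ) : 0 < 1 + Real.exp t := by positivity

lemma logistic_pos (t : ℝ) : 0 < logistic t :=
  div_pos (Real.exp_pos t) (one_add_exp_pos t)

lemma logistic_lt_one (t : ℝ) : logistic t < 1 := by
  rw [logistic, div_lt_one (one_add_exp_pos t)]; linarith

lemma continuous_logistic : Continuous logistic :=
  Real.continuous_exp.div (continuous_const.add Real.continuous_exp)
    (fun t => (one_add_exp_pos t).ne')

lemma gLink_pos {n : ℕ} (β z : Fin n → ℝ) : 0 < gLink β z := logistic_pos _
lemma gLink_lt_one {n : ℕ} (β z : Fin n → ℝ) : gLink β z < 1 := logistic_lt_one _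

lemma continuous_gLink {n : ℕ} (β : Fin n → ℝ) : Continuous (fun z => gLink β z) :=
  continuous_logistic.comp (by fun_prop)

lemma fBin_nonneg {n K : ℕ} (β z : Fin n → ℝ) (k : ℕ) : 0 ≤ fBin K β z k := by
  have h1 := gLink_pos β z; have h2 := gLink_lt_one β z
  have h3 : (0:ℝ) ≤ 1 - gLink β z := by linarith
  unfold fBin
  exact mul_nonneg (mul_nonneg (by positivity) (pow_nonneg h1.le _)) (pow_nonneg h3 _)

lemma fBin_pos {n K : ℕ} (β z : Fin n → ℝ) {k : ℕ} (hk : k ≤ K) : 0 < fBin K β z k := by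
  have h1 := gLink_pos β z; have h2 := gLink_lt_one β z
  have hc : 0 < (K.choose k : ℝ) := by exact_mod_cast Nat.choose_pos hk
  unfold fBin
  have : (0:ℝ) < 1 - gLink β z := by linarith
  positivity

lemma fBin_eq_zero {n K : ℕ} (β z : Fin n → ℝ) {k : ℕ} (hk : K < k) : fBin K β z k = 0 := by
  unfold fBin; rw [Nat.choose_eq_zero_of_lt hk]; simp

lemma fBin_zero_lt_one {n K : ℕ} (β z : Fin n → ℝ) (hK : 1 ≤ K) : fBin K β z 0 < 1 := by
  have h1 := gLink_pos β z; have h2 := gLink_lt_one β z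
  unfold fBin
  simp only [Nat.choose_zero_right, Nat.cast_one, pow_zero, Nat.sub_zero, one_mul, mul_one]
  exact pow_lt_one₀ (by linarith) (by linarith) (by omega)

lemma continuous_fBin {n : ℕ} (K : ℕ) (β : Fin n → ℝ) (k : ℕ) :
    Continuous (fun z => fBin K β z k) := by
  unfold fBin
  exact (continuous_const.mul ((continuous_gLink β).pow k)).mul
    ((continuous_const.sub (continuous_gLink β)).pow (K - k))

lemma piLog_pos {p : ℕ} (η : Fin (p + 2) → ℝ) (x : Fin p → ℝ) (k : ℕ) : 0 < piLog η x k :=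
  logistic_pos _
lemma piLog_lt_one {p : ℕ} (η : Fin (p + 2) → ℝ) (x : Fin p → ℝ) (k : ℕ) : piLog η x k < 1 :=
  logistic_lt_one _

lemma continuous_piLog {p : ℕ} (η : Fin (p + 2) → ℝ) (k : ℕ) :
    Continuous (fun x => piLog η x k) := by
  unfold piLog
  refine continuous_logistic.comp (continuous_finset_sum _ fun j _ => continuous_const.mul ?_)
  show Continuous fun x : Fin p → ℝ => (Fin.cons (1:ℝ) (Fin.snoc x (k:ℝ)) : Fin (p+2) → ℝ) j
  induction j using Fin.cases with
  | zero => simpa using continuous_const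
  | succ i =>
    simp only [Fin.cons_succ]
    induction i using Fin.lastCases with
    | last => simpa [Fin.snoc_last] using continuous_const
    | cast i => simpa [Fin.snoc_castSucc] using continuous_apply i



lemma fBin_sum {n K : ℕ} (β z : Fin n → ℝ) :
    ∑ k ∈ Finset.range (K+1), fBin K β z k = 1 := by
  have h := add_pow (gLink β z) (1 - gLink β z) K
  rw [add_sub_cancel, one_pow] at h
  calc ∑ k ∈ Finset.range (K+1), fBin K β z k
      = ∑ k ∈ Finset.range (K+1),
          gLink β z ^ k * (1 - gLink β z) ^ (K - k) * (K.choose k : ℝ) := by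
        refine Finset.sum_congr rfl fun k _ => ?_; unfold fBin; ring
    _ = 1 := h.symm

lemma fBin_le_one {n K : ℕ} (β z : Fin n → ℝ) (k : ℕ) : fBin K β z k ≤ 1 := by
  rcases le_or_gt k K with hk | hk
  · calc fBin K β z k ≤ ∑ j ∈ Finset.range (K+1), fBin K β z j :=
        Finset.single_le_sum (fun j _ => fBin_nonneg β z j)
          (Finset.mem_range.mpr (by omega))
      _ = 1 := fBin_sum β z
  · rw [fBin_eq_zero β z hk]; norm_num

lemma oneInflated_nonneg {n K : ℕ} (β z : Fin n → ℝ) {ω : ℝ} (hω : ω ∈ Set.Ioc (0:ℝ) 1)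
    (k : ℕ) : 0 ≤ oneInflated (fBin K β z) ω k := by
  obtain ⟨hω0, hω1⟩ := hω
  have h0 := fBin_nonneg (K:=K) β z 0
  have h1 := fBin_nonneg (K:=K) β z 1
  have hle := fBin_le_one (K:=K) β z 0
  have hk := fBin_nonneg (K:=K) β z k
  unfold oneInflated
  split_ifs <;> nlinarith

lemma oneInflated_le_one {n K : ℕ} (β z : Fin n → ℝ) {ω : ℝ} (hω : ω ∈ Set.Ioc (0:ℝ) 1)
    (k : ℕ) : oneInflated (fBin K β z) ω k ≤ 1 := by
  obtain ⟨hω0, hω1⟩ := hω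
  have h0 := fBin_nonneg (K:=K) β z 0
  have h1 := fBin_le_one (K:=K) β z 1
  have hle := fBin_le_one (K:=K) β z 0
  have hk := fBin_le_one (K:=K) β z k
  unfold oneInflated
  split_ifs <;> nlinarith

lemma continuous_oneInflated {n K : ℕ} (β : Fin n → ℝ) (ω : ℝ) (k : ℕ) :
    Continuous (fun z => oneInflated (fBin K β z) ω k) := by
  unfold oneInflated
  split_ifs with h1 h2
  · exact continuous_fBin K β 0
  · exact (continuous_const.mul (continuous_const.sub (continuous_fBin K β 0))).add
      (continuous_const.mul (continuous_fBin K β 1))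
  · exact continuous_const.mul (continuous_fBin K β k)

lemma tsum_shift_eq {K : ℕ} (t : ℕ → ℝ) (ht : ∀ k, K < k → t k = 0) :
    (∑' k : ℕ, t (k + 1)) = ∑ k ∈ Finset.range K, t (k + 1) := by
  refine tsum_eq_sum fun k hk => ht _ ?_
  simp only [Finset.mem_range, not_lt] at hk; omega


/-- The embedding `(x, y) ↦ (1, x, y)` into covariate space. -/
noncomputable def zeta (p q : ℕ) : (Fin p → ℝ) × (Fin q → ℝ) → (Fin (p + q + 1) → ℝ) :=
  fun xy => Fin.cons 1 (Fin.append xy.1 xy.2)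

/-- Extract the `x` coordinates back from `z = (1, x, y)`. -/
def xi (p q : ℕ) (z : Fin (p + q + 1) → ℝ) : Fin p → ℝ :=
  fun i => z (Fin.succ (Fin.castAdd q i))

lemma xi_zeta (p q : ℕ) (x : Fin p → ℝ) (y : Fin q → ℝ) :
    xi p q (zeta p q (x, y)) = x := by
  funext i
  simp [xi, zeta, Fin.append_left]

lemma measurable_zeta (p q : ℕ) : Measurable (zeta p q) := by
  refine measurable_pi_lambda _ fun i => ?_
  induction i using Fin.cases with
  | zero => simpa [zeta] using measurable_const
  | succ j =>
    simp only [zeta, Fin.cons_succ]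
    induction j using Fin.addCases with
    | left i => simpa [Fin.append_left, Function.comp_def] using (measurable_pi_apply i).comp measurable_fst
    | right i => simpa [Fin.append_right, Function.comp_def] using (measurable_pi_apply i).comp measurable_snd

lemma measurable_xi (p q : ℕ) : Measurable (xi p q) := by
  refine measurable_pi_lambda _ fun i => ?_
  exact measurable_pi_apply _

/-- Generic conditional-density lintegral identity. -/
lemma lintegral_cond {Ω : Type*} [MeasurableSpace Ω] {γ : Type*} [MeasurableSpace γ]
    (P Q : Measure Ω) [IsFiniteMeasure Q]
    {Zf : Ω → γ} (hZm : Measurable Zf)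
    {ρ : γ → ℝ} (hρm : Measurable ρ) (hρ0 : ∀ z, 0 ≤ ρ z) (hρ1 : ∀ z, ρ z ≤ 1)
    (h : ∀ S : Set γ, MeasurableSet S →
      P (Zf ⁻¹' S) = ENNReal.ofReal (∫ a in Zf ⁻¹' S, ρ (Zf a) ∂Q))
    {W : γ → ENNReal} (hW : Measurable W) :
    ∫⁻ a, W (Zf a) ∂P = ∫⁻ a, ENNReal.ofReal (ρ (Zf a)) * W (Zf a) ∂Q := by
  have hρ' : Measurable fun a => ENNReal.ofReal (ρ (Zf a)) :=
    ENNReal.measurable_ofReal.comp (hρm.comp hZm)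
  have hmap : P.map Zf = (Q.withDensity fun a => ENNReal.ofReal (ρ (Zf a))).map Zf := by
    ext S hS
    rw [Measure.map_apply hZm hS, Measure.map_apply hZm hS, withDensity_apply _ (hZm hS),
      h S hS]
    refine ofReal_integral_eq_lintegral_ofReal ?_ ?_
    · refine (integrable_const (1:ℝ)).mono' ((hρm.comp hZm).aestronglyMeasurable) ?_
      exact Filter.Eventually.of_forall fun a => by
        rw [Real.norm_eq_abs, abs_of_nonneg (hρ0 _)]; exact hρ1 _
    · exact Filter.Eventually.of_forall fun a => hρ0 _
  calc ∫⁻ a, W (Zf a) ∂P = ∫⁻ z, W z ∂(P.map Zf) := (lintegral_map hW hZm).symm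
    _ = ∫⁻ z, W z ∂((Q.withDensity fun a => ENNReal.ofReal (ρ (Zf a))).map Zf) := by
        rw [hmap]
    _ = ∫⁻ a, W (Zf a) ∂(Q.withDensity fun a => ENNReal.ofReal (ρ (Zf a))) :=
        lintegral_map hW hZm
    _ = ∫⁻ a, ENNReal.ofReal (ρ (Zf a)) * W (Zf a) ∂Q :=
        lintegral_withDensity_eq_lintegral_mul Q hρ' (hW.comp hZm)

lemma sum_shift {K : ℕ} (hK : 1 ≤ K) (s : ℕ → ℝ) :
    ∑ k ∈ Finset.range K, s (k + 1) = s 1 + ∑ k ∈ Finset.range (K - 1), s (k + 2) := by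
  obtain ⟨m, rfl⟩ := Nat.exists_eq_add_of_le hK
  rw [Nat.add_comm 1 m, Finset.sum_range_succ' (fun k => s (k + 1)) m]
  have h2 : m + 1 - 1 = m := by omega
  rw [h2, add_comm]

noncomputable def Phi (p q K : ℕ) (β : Fin (p + q + 1) → ℝ) (η : Fin (p + 2) → ℝ)
    (z : Fin (p + q + 1) → ℝ) : ℝ :=
  ∑ k ∈ Finset.range K, piLog η (xi p q z) (k + 1) * fBin K β z (k + 1)

noncomputable def Bf {n : ℕ} (K : ℕ) (β : Fin n → ℝ) (z : Fin n → ℝ) : ℝ :=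
  1 / fBin K β z 1

noncomputable def Af (p q K : ℕ) (β : Fin (p + q + 1) → ℝ) (η : Fin (p + 2) → ℝ)
    (z : Fin (p + q + 1) → ℝ) : ℝ :=
  piLog η (xi p q z) 1 / Phi p q K β η z

noncomputable def u1 (p q K : ℕ) (β : Fin (p + q + 1) → ℝ) (η : Fin (p + 2) → ℝ) (ω : ℝ)
    (z : Fin (p + q + 1) → ℝ) : ℝ :=
  ω * ((Phi p q K β η z - piLog η (xi p q z) 1 * fBin K β z 1) * Af p q K β η z)

noncomputable def u2 (p q K : ℕ) (β : Fin (p + q + 1) → ℝ) (η : Fin (p + 2) → ℝ) (ω : ℝ)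
    (z : Fin (p + q + 1) → ℝ) : ℝ :=
  oneInflated (fBin K β z) ω 1 * (piLog η (xi p q z) 1 * (Bf K β z - Af p q K β η z))

noncomputable def cf (p q K : ℕ) (β : Fin (p + q + 1) → ℝ) (η : Fin (p + 2) → ℝ)
    (z : Fin (p + q + 1) → ℝ) : ℝ :=
  (1 - fBin K β z 0) * (piLog η (xi p q z) 1 * (Bf K β z - Af p q K β η z))

variable {p q K : ℕ} (β : Fin (p + q + 1) → ℝ) (η : Fin (p + 2) → ℝ)

lemma lt_Phi (hK : 2 ≤ K) (z : Fin (p + q + 1) → ℝ) :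
    piLog η (xi p q z) 1 * fBin K β z 1 < Phi p q K β η z := by
  have h0 : piLog η (xi p q z) 1 * fBin K β z 1
      = ∑ k ∈ ({0} : Finset ℕ), piLog η (xi p q z) (k + 1) * fBin K β z (k + 1) := by
    simp
  rw [h0]
  refine Finset.sum_lt_sum_of_subset ?_ (i := 1) ?_ (by simp) ?_ ?_
  · intro j hj; simp at hj; simp [hj, Finset.mem_range]; omega
  · simp [Finset.mem_range]; omega
  · exact mul_pos (piLog_pos η _ 2) (fBin_pos β z (by omega))
  · intro j _ _
    exact mul_nonneg (piLog_pos η _ _).le (fBin_nonneg (K := K) β z _)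

lemma Phi_pos (hK : 2 ≤ K) (z : Fin (p + q + 1) → ℝ) : 0 < Phi p q K β η z :=
  lt_trans (mul_pos (piLog_pos η _ 1) (fBin_pos β z (by omega))) (lt_Phi β η hK z)

lemma Af_pos (hK : 2 ≤ K) (z : Fin (p + q + 1) → ℝ) : 0 < Af p q K β η z :=
  div_pos (piLog_pos η _ 1) (Phi_pos β η hK z)

lemma Af_lt_Bf (hK : 2 ≤ K) (z : Fin (p + q + 1) → ℝ) :
    Af p q K β η z < Bf K β z := by
  rw [Af, Bf, div_lt_div_iff₀ (Phi_pos β η hK z) (fBin_pos β z (by omega))]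
  calc piLog η (xi p q z) 1 * fBin K β z 1 < Phi p q K β η z := lt_Phi β η hK z
    _ = 1 * Phi p q K β η z := (one_mul _).symm

lemma u1_nonneg (hK : 2 ≤ K) {ω : ℝ} (hω : ω ∈ Set.Ioc (0:ℝ) 1) (z : Fin (p + q + 1) → ℝ) :
    0 ≤ u1 p q K β η ω z :=
  mul_nonneg hω.1.le (mul_nonneg (by linarith [lt_Phi β η hK z]) (Af_pos β η hK z).le)

lemma u2_nonneg (hK : 2 ≤ K) {ω : ℝ} (hω : ω ∈ Set.Ioc (0:ℝ) 1) (z : Fin (p + q + 1) → ℝ) :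
    0 ≤ u2 p q K β η ω z :=
  mul_nonneg (oneInflated_nonneg β z hω 1)
    (mul_nonneg (piLog_pos η _ 1).le (by linarith [Af_lt_Bf β η hK z]))

lemma cf_pos (hK : 2 ≤ K) (z : Fin (p + q + 1) → ℝ) : 0 < cf p q K β η z :=
  mul_pos (by linarith [fBin_zero_lt_one (K := K) β z (by omega)])
    (mul_pos (piLog_pos η _ 1) (by linarith [Af_lt_Bf β η hK z]))

lemma key_id (hK : 2 ≤ K) (ω : ℝ) (z : Fin (p + q + 1) → ℝ) :
    u1 p q K β η ω z - u2 p q K β η ω z = (ω - 1) * cf p q K β η z := by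
  have hΦ : Phi p q K β η z ≠ 0 := (Phi_pos β η hK z).ne'
  have hf1 : fBin K β z 1 ≠ 0 := (fBin_pos β z (by omega)).ne'
  rw [u1, u2, cf, Af, Bf, oneInflated]
  norm_num
  field_simp
  ring

lemma tsum_u1 (hK : 2 ≤ K) (ω : ℝ) (z : Fin (p + q + 1) → ℝ) :
    (∑' k : ℕ, oneInflated (fBin K β z) ω (k + 2)
        * (piLog η (xi p q z) (k + 2) * Af p q K β η z)) = u1 p q K β η ω z := by
  have hvan : ∀ k ∉ Finset.range (K - 1),
      oneInflated (fBin K β z) ω (k + 2) * (piLog η (xi p q z) (k + 2) * Af p q K β η z)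
        = 0 := by
    intro k hk
    simp only [Finset.mem_range, not_lt] at hk
    have : fBin K β z (k + 2) = 0 := fBin_eq_zero β z (by omega)
    simp [oneInflated, this]
  rw [tsum_eq_sum hvan]
  have hshift := sum_shift (by omega : 1 ≤ K)
    (fun k => piLog η (xi p q z) k * fBin K β z k)
  have hsum : ∑ k ∈ Finset.range (K - 1), piLog η (xi p q z) (k + 2) * fBin K β z (k + 2)
      = Phi p q K β η z - piLog η (xi p q z) 1 * fBin K β z 1 := by
    rw [Phi]; rw [hshift]; ring
  calc ∑ k ∈ Finset.range (K - 1), oneInflated (fBin K β z) ω (k + 2)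
        * (piLog η (xi p q z) (k + 2) * Af p q K β η z)
      = ω * Af p q K β η z
          * ∑ k ∈ Finset.range (K - 1), piLog η (xi p q z) (k + 2) * fBin K β z (k + 2) := by
        rw [Finset.mul_sum]
        refine Finset.sum_congr rfl fun k _ => ?_
        simp [oneInflated]; ring
    _ = u1 p q K β η ω z := by rw [hsum, u1]; ring

lemma continuous_xi : Continuous (xi p q) :=
  continuous_pi fun _ => continuous_apply _

lemma continuous_Phi : Continuous (Phi p q K β η) := by
  refine continuous_finset_sum _ fun k _ => Continuous.mul ?_ (continuous_fBin K β (k + 1))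
  exact (continuous_piLog η (k + 1)).comp continuous_xi

lemma continuous_Af (hK : 2 ≤ K) : Continuous (Af p q K β η) :=
  Continuous.div ((continuous_piLog η 1).comp continuous_xi) (continuous_Phi β η)
    fun z => (Phi_pos β η hK z).ne'

lemma continuous_Bf (hK : 2 ≤ K) : Continuous (fun z : Fin (p + q + 1) → ℝ => Bf K β z) :=
  Continuous.div continuous_const (continuous_fBin K β 1)
    fun z => (fBin_pos β z (by omega : 1 ≤ K)).ne'

lemma continuous_BA (hK : 2 ≤ K) :
    Continuous (fun z => Bf K β z - Af p q K β η z) :=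
  (continuous_Bf β hK).sub (continuous_Af β η hK)

lemma continuous_u1 (hK : 2 ≤ K) (ω : ℝ) : Continuous (u1 p q K β η ω) := by
  unfold u1
  exact continuous_const.mul
    (((continuous_Phi β η).sub (((continuous_piLog η 1).comp continuous_xi).mul
      (continuous_fBin K β 1))).mul (continuous_Af β η hK))

lemma continuous_u2 (hK : 2 ≤ K) (ω : ℝ) : Continuous (u2 p q K β η ω) := by
  unfold u2
  exact (continuous_oneInflated β ω 1).mul
    (((continuous_piLog η 1).comp continuous_xi).mul (continuous_BA β η hK))

lemma continuous_cf (hK : 2 ≤ K) : Continuous (cf p q K β η) := by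
  unfold cf
  exact (continuous_const.sub (continuous_fBin K β 0)).mul
    (((continuous_piLog η 1).comp continuous_xi).mul (continuous_BA β η hK))

lemma summable_terms (hK : 2 ≤ K) (ω : ℝ) (z : Fin (p + q + 1) → ℝ) :
    Summable (fun k : ℕ => oneInflated (fBin K β z) ω (k + 2)
      * (piLog η (xi p q z) (k + 2) * Af p q K β η z)) := by
  refine summable_of_ne_finset_zero (s := Finset.range (K - 1)) fun k hk => ?_
  simp only [Finset.mem_range, not_lt] at hk
  have : fBin K β z (k + 2) = 0 := fBin_eq_zero β z (by omega)
  simp [oneInflated, this]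


end ScoreAux

/-- Theorem 4(a) of the paper, single-individual form: the expectation of the
score-like statistic is nonpositive, with equality iff `ω₀ = 1`. -/
theorem score_expectation_nonpos_iff_no_inflation
    {Ω : Type*} [MeasurableSpace Ω] (P : Measure Ω) [IsProbabilityMeasure P]
    (p q K : ℕ) (hK : 2 ≤ K)
    (β₀ : Fin (p + q + 1) → ℝ) (η₀ : Fin (p + 2) → ℝ)
    (ω₀ : ℝ) (hω : ω₀ ∈ Set.Ioc (0 : ℝ) 1)
    (X : Ω → Fin p → ℝ) (Y : Ω → Fin q → ℝ) (D : Ω → ℕ) (R : Ω → ℝ)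
    (Z : Ω → Fin (p + q + 1) → ℝ)
    (hZ : ∀ a, Z a = Fin.cons 1 (Fin.append (X a) (Y a)))
    (hR01 : ∀ a, R a = 0 ∨ R a = 1)
    (hXm : Measurable X) (hYm : Measurable Y) (hDm : Measurable D) (hRm : Measurable R)
    -- the conditional pmf of `D` given `Z = z` is the one-inflated Binomial model
    (hD : ∀ (k : ℕ) (S : Set (Fin (p + q + 1) → ℝ)), MeasurableSet S →
      P ({a | D a = k} ∩ Z ⁻¹' S)
        = ENNReal.ofReal (∫ a in Z ⁻¹' S, oneInflated (fBin K β₀ (Z a)) ω₀ k ∂P))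
    -- missing at random with the logistic non-missingness model
    (hMAR : ∀ (k : ℕ) (S : Set ((Fin p → ℝ) × (Fin q → ℝ))), MeasurableSet S →
      P ({a | R a = 1} ∩ {a | D a = k} ∩ {a | (X a, Y a) ∈ S})
        = ENNReal.ofReal (∫ a in {a | D a = k} ∩ {a | (X a, Y a) ∈ S},
            piLog η₀ (X a) k ∂P))
    (hInt : Integrable (fun a =>
      R a * (if 0 < D a then (1 : ℝ) else 0) * piLog η₀ (X a) 1
          / (∑' k, piLog η₀ (X a) (k + 1) * fBin K β₀ (Z a) (k + 1))
        - R a * (if D a = 1 then (1 : ℝ) else 0) / fBin K β₀ (Z a) 1) P) :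
    (∫ a, (R a * (if 0 < D a then (1 : ℝ) else 0) * piLog η₀ (X a) 1
          / (∑' k, piLog η₀ (X a) (k + 1) * fBin K β₀ (Z a) (k + 1))
        - R a * (if D a = 1 then (1 : ℝ) else 0) / fBin K β₀ (Z a) 1) ∂P) ≤ 0 ∧
      ((∫ a, (R a * (if 0 < D a then (1 : ℝ) else 0) * piLog η₀ (X a) 1
          / (∑' k, piLog η₀ (X a) (k + 1) * fBin K β₀ (Z a) (k + 1))
        - R a * (if D a = 1 then (1 : ℝ) else 0) / fBin K β₀ (Z a) 1) ∂P) = 0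
        ↔ ω₀ = 1) := by
  classical
  have hZfun : Z = fun a => ScoreAux.zeta p q (X a, Y a) := funext fun a => hZ a
  have hZm : Measurable Z := by
    rw [hZfun]; exact (ScoreAux.measurable_zeta p q).comp (hXm.prodMk hYm)
  have hXZ : ∀ a, ScoreAux.xi p q (Z a) = X a := fun a => by
    rw [hZfun]; exact ScoreAux.xi_zeta p q (X a) (Y a)
  have hR0 : ∀ a, 0 ≤ R a := fun a => by rcases hR01 a with h | h <;> rw [h] <;> norm_num
  have hSk : ∀ k : ℕ, MeasurableSet {a | D a = k} := fun k => hDm (measurableSet_singleton k)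
  have hER : MeasurableSet {a | R a = 1} := hRm (measurableSet_singleton 1)
  set F₁ : Ω → ℝ := fun a =>
    R a * (if 2 ≤ D a then (1 : ℝ) else 0) * ScoreAux.Af p q K β₀ η₀ (Z a) with hF₁def
  set F₂ : Ω → ℝ := fun a =>
    R a * (if D a = 1 then (1 : ℝ) else 0)
      * (ScoreAux.Bf K β₀ (Z a) - ScoreAux.Af p q K β₀ η₀ (Z a)) with hF₂def
  have hts : ∀ a, (∑' k, piLog η₀ (X a) (k + 1) * fBin K β₀ (Z a) (k + 1))
      = ScoreAux.Phi p q K β₀ η₀ (Z a) := by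
    intro a
    conv_lhs => rw [← hXZ a]
    exact ScoreAux.tsum_shift_eq
      (fun k => piLog η₀ (ScoreAux.xi p q (Z a)) k * fBin K β₀ (Z a) k)
      (fun k hk => by
        show piLog η₀ (ScoreAux.xi p q (Z a)) k * fBin K β₀ (Z a) k = 0
        rw [ScoreAux.fBin_eq_zero β₀ (Z a) hk, mul_zero])
  have hsplit : ∀ a, R a * (if 0 < D a then (1 : ℝ) else 0) * piLog η₀ (X a) 1
          / (∑' k, piLog η₀ (X a) (k + 1) * fBin K β₀ (Z a) (k + 1))
        - R a * (if D a = 1 then (1 : ℝ) else 0) / fBin K β₀ (Z a) 1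
      = F₁ a - F₂ a := by
    intro a
    rw [hts a, ← hXZ a]
    simp only [hF₁def, hF₂def]
    rcases Nat.lt_or_ge (D a) 1 with h | h
    · have h0 : D a = 0 := by omega
      simp [h0]
    rcases Nat.lt_or_ge (D a) 2 with h2 | h2
    · have h1 : D a = 1 := by omega
      simp only [h1]
      norm_num [ScoreAux.Af, ScoreAux.Bf]
      ring
    · have h1 : D a ≠ 1 := by omega
      have hpos : 0 < D a := by omega
      have h2' : 2 ≤ D a := h2
      rw [if_pos hpos, if_pos h2', if_neg h1]
      norm_num [ScoreAux.Af, ScoreAux.Bf]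
      ring
  simp only [hsplit]
  have hG : Integrable (fun a => F₁ a - F₂ a) P :=
    hInt.congr (Filter.Eventually.of_forall hsplit)
  have hF₁0 : ∀ a, 0 ≤ F₁ a := fun a => by
    rw [hF₁def]
    exact mul_nonneg (mul_nonneg (hR0 a) (by split_ifs <;> norm_num))
      (ScoreAux.Af_pos β₀ η₀ hK (Z a)).le
  have hBA0 : ∀ z, 0 ≤ ScoreAux.Bf K β₀ z - ScoreAux.Af p q K β₀ η₀ z := fun z => by
    linarith [ScoreAux.Af_lt_Bf β₀ η₀ hK z]
  have hF₂0 : ∀ a, 0 ≤ F₂ a := fun a => by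
    rw [hF₂def]
    exact mul_nonneg (mul_nonneg (hR0 a) (by split_ifs <;> norm_num)) (hBA0 (Z a))
  have hmax1 : ∀ a, F₁ a = max (F₁ a - F₂ a) 0 := by
    intro a
    by_cases h1 : D a = 1
    · have hF1z : F₁ a = 0 := by rw [hF₁def]; simp [h1]
      rw [hF1z, zero_sub, max_eq_right (by linarith [hF₂0 a])]
    · have hF2z : F₂ a = 0 := by rw [hF₂def]; simp [h1]
      rw [hF2z, sub_zero, max_eq_left (hF₁0 a)]
  have hmax2 : ∀ a, F₂ a = max (-(F₁ a - F₂ a)) 0 := by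
    intro a
    by_cases h1 : D a = 1
    · have hF1z : F₁ a = 0 := by rw [hF₁def]; simp [h1]
      rw [hF1z, zero_sub, neg_neg, max_eq_left (hF₂0 a)]
    · have hF2z : F₂ a = 0 := by rw [hF₂def]; simp [h1]
      rw [hF2z, sub_zero, max_eq_right (by linarith [hF₁0 a])]
  have hF1int : Integrable F₁ P :=
    hG.pos_part.congr (Filter.Eventually.of_forall fun a => (hmax1 a).symm)
  have hF2int : Integrable F₂ P :=
    hG.neg.pos_part.congr (Filter.Eventually.of_forall fun a => (hmax2 a).symm)
  -- the conditional-distribution steps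
  have stepB : ∀ (k : ℕ) (W : (Fin (p + q + 1) → ℝ) → ENNReal), Measurable W →
      ∫⁻ a in {a | D a = k}, W (Z a) ∂P
        = ∫⁻ a, ENNReal.ofReal (oneInflated (fBin K β₀ (Z a)) ω₀ k) * W (Z a) ∂P := by
    intro k W hW
    refine ScoreAux.lintegral_cond (P.restrict {a | D a = k}) P hZm
      (ScoreAux.continuous_oneInflated β₀ ω₀ k).measurable
      (fun z => ScoreAux.oneInflated_nonneg β₀ z hω k)
      (fun z => ScoreAux.oneInflated_le_one β₀ z hω k) ?_ hW
    intro S hS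
    rw [Measure.restrict_apply (hZm hS), Set.inter_comm]
    exact hD k S hS
  have stepA : ∀ (k : ℕ) (W : (Fin (p + q + 1) → ℝ) → ENNReal), Measurable W →
      ∫⁻ a in {a | R a = 1} ∩ {a | D a = k}, W (Z a) ∂P
        = ∫⁻ a in {a | D a = k},
            ENNReal.ofReal (piLog η₀ (ScoreAux.xi p q (Z a)) k) * W (Z a) ∂P := by
    intro k W hW
    have hxm : Measurable (fun z => piLog η₀ (ScoreAux.xi p q z) k) :=
      ((ScoreAux.continuous_piLog η₀ k).comp (ScoreAux.continuous_xi)).measurable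
    refine ScoreAux.lintegral_cond (P.restrict ({a | R a = 1} ∩ {a | D a = k}))
      (P.restrict {a | D a = k}) hZm hxm
      (fun z => (ScoreAux.piLog_pos η₀ _ k).le)
      (fun z => (ScoreAux.piLog_lt_one η₀ _ k).le) ?_ hW
    intro S hS
    have hS' : MeasurableSet (ScoreAux.zeta p q ⁻¹' S) := ScoreAux.measurable_zeta p q hS
    have hset : {a | (X a, Y a) ∈ ScoreAux.zeta p q ⁻¹' S} = Z ⁻¹' S := by
      ext a; simp only [Set.mem_setOf_eq, Set.mem_preimage, hZfun]
    have h1 := hMAR k (ScoreAux.zeta p q ⁻¹' S) hS'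
    rw [hset] at h1
    have e1 : (fun a => piLog η₀ (X a) k) = fun a => piLog η₀ (ScoreAux.xi p q (Z a)) k :=
      funext fun a => by rw [hXZ a]
    calc (P.restrict ({a | R a = 1} ∩ {a | D a = k})) (Z ⁻¹' S)
        = P ({a | R a = 1} ∩ {a | D a = k} ∩ (Z ⁻¹' S)) := by
          rw [Measure.restrict_apply (hZm hS), Set.inter_comm]
      _ = ENNReal.ofReal (∫ a in {a | D a = k} ∩ Z ⁻¹' S, piLog η₀ (X a) k ∂P) := h1
      _ = ENNReal.ofReal (∫ a in Z ⁻¹' S,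
            piLog η₀ (ScoreAux.xi p q (Z a)) k ∂(P.restrict {a | D a = k})) := by
          rw [Measure.restrict_restrict (hZm hS),
            Set.inter_comm (Z ⁻¹' S) {a | D a = k}, ← e1]
  have stepC : ∀ (k : ℕ) (W : (Fin (p + q + 1) → ℝ) → ENNReal), Measurable W →
      ∫⁻ a in {a | R a = 1} ∩ {a | D a = k}, W (Z a) ∂P
        = ∫⁻ a, ENNReal.ofReal (oneInflated (fBin K β₀ (Z a)) ω₀ k)
            * (ENNReal.ofReal (piLog η₀ (ScoreAux.xi p q (Z a)) k) * W (Z a)) ∂P := by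
    intro k W hW
    rw [stepA k W hW]
    exact stepB k (fun z => ENNReal.ofReal (piLog η₀ (ScoreAux.xi p q z) k) * W z)
      ((ENNReal.measurable_ofReal.comp
        (((ScoreAux.continuous_piLog η₀ k).comp ScoreAux.continuous_xi).measurable)).mul hW)
  -- the F₂ side
  have hW₂m : Measurable
      (fun z => ENNReal.ofReal (ScoreAux.Bf K β₀ z - ScoreAux.Af p q K β₀ η₀ z)) :=
    ENNReal.measurable_ofReal.comp (ScoreAux.continuous_BA β₀ η₀ hK).measurable
  have hind2 : (fun a => ENNReal.ofReal (F₂ a))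
      = Set.indicator ({a | R a = 1} ∩ {a | D a = 1})
          (fun a => ENNReal.ofReal
            (ScoreAux.Bf K β₀ (Z a) - ScoreAux.Af p q K β₀ η₀ (Z a))) := by
    funext a
    by_cases hRa : R a = 1
    · by_cases hDa : D a = 1
      · rw [Set.indicator_of_mem
          (show a ∈ {a | R a = 1} ∩ {a | D a = 1} from ⟨hRa, hDa⟩)]
        rw [hF₂def]; simp [hRa, hDa]
      · rw [Set.indicator_of_notMem (fun h => hDa h.2)]
        rw [hF₂def]; simp [hDa]
    · have hRa0 : R a = 0 := (hR01 a).resolve_right hRa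
      rw [Set.indicator_of_notMem (fun h => hRa h.1)]
      rw [hF₂def]; simp [hRa0]
  have hl2 : ∫⁻ a, ENNReal.ofReal (F₂ a) ∂P
      = ∫⁻ a, ENNReal.ofReal (ScoreAux.u2 p q K β₀ η₀ ω₀ (Z a)) ∂P := by
    rw [hind2, lintegral_indicator (hER.inter (hSk 1)), stepC 1 _ hW₂m]
    refine lintegral_congr fun a => ?_
    rw [← ENNReal.ofReal_mul (ScoreAux.piLog_pos η₀ _ 1).le,
      ← ENNReal.ofReal_mul (ScoreAux.oneInflated_nonneg β₀ (Z a) hω 1)]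
    rfl
  have hu2m : Measurable (fun a => ScoreAux.u2 p q K β₀ η₀ ω₀ (Z a)) :=
    ((ScoreAux.continuous_u2 β₀ η₀ hK ω₀).measurable).comp hZm
  have hu20 : ∀ a, 0 ≤ ScoreAux.u2 p q K β₀ η₀ ω₀ (Z a) :=
    fun a => ScoreAux.u2_nonneg β₀ η₀ hK hω (Z a)
  have hu2int : Integrable (fun a => ScoreAux.u2 p q K β₀ η₀ ω₀ (Z a)) P := by
    refine ⟨hu2m.aestronglyMeasurable, ?_⟩
    rw [hasFiniteIntegral_iff_ofReal (Filter.Eventually.of_forall hu20), ← hl2,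
      ← hasFiniteIntegral_iff_ofReal (Filter.Eventually.of_forall hF₂0)]
    exact hF2int.2
  have hIF2 : ∫ a, F₂ a ∂P = ∫ a, ScoreAux.u2 p q K β₀ η₀ ω₀ (Z a) ∂P := by
    rw [integral_eq_lintegral_of_nonneg_ae (Filter.Eventually.of_forall hF₂0)
        hF2int.aestronglyMeasurable,
      integral_eq_lintegral_of_nonneg_ae (Filter.Eventually.of_forall hu20)
        hu2m.aestronglyMeasurable, hl2]
  -- the F₁ side
  have hW₁m : Measurable (fun z => ENNReal.ofReal (ScoreAux.Af p q K β₀ η₀ z)) :=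
    ENNReal.measurable_ofReal.comp (ScoreAux.continuous_Af β₀ η₀ hK).measurable
  have hmeas2 : MeasurableSet {a | 2 ≤ D a} := hDm measurableSet_Ici
  have hind1 : (fun a => ENNReal.ofReal (F₁ a))
      = Set.indicator ({a | R a = 1} ∩ {a | 2 ≤ D a})
          (fun a => ENNReal.ofReal (ScoreAux.Af p q K β₀ η₀ (Z a))) := by
    funext a
    by_cases hRa : R a = 1
    · by_cases hDa : 2 ≤ D a
      · rw [Set.indicator_of_mem
          (show a ∈ {a | R a = 1} ∩ {a | 2 ≤ D a} from ⟨hRa, hDa⟩)]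
        rw [hF₁def]; simp [hRa, hDa]
      · rw [Set.indicator_of_notMem (fun h => hDa h.2)]
        rw [hF₁def]; simp [hDa]
    · have hRa0 : R a = 0 := (hR01 a).resolve_right hRa
      rw [Set.indicator_of_notMem (fun h => hRa h.1)]
      rw [hF₁def]; simp [hRa0]
  have hun : {a | R a = 1} ∩ {a | 2 ≤ D a}
      = ⋃ k : ℕ, ({a | R a = 1} ∩ {a | D a = k + 2}) := by
    ext a
    simp only [Set.mem_inter_iff, Set.mem_setOf_eq, Set.mem_iUnion]
    constructor
    · rintro ⟨h1, h2⟩; exact ⟨D a - 2, h1, by omega⟩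
    · rintro ⟨k, h1, h2⟩; exact ⟨h1, by omega⟩
  have hdisj : Pairwise (Function.onFun Disjoint
      fun k : ℕ => {a | R a = 1} ∩ {a | D a = k + 2}) := by
    intro i j hij
    simp only [Function.onFun, Set.disjoint_left]
    rintro a ⟨_, hi⟩ ⟨_, hj⟩
    simp only [Set.mem_setOf_eq] at hi hj
    omega
  have htermm : ∀ k : ℕ, Measurable (fun a =>
      ENNReal.ofReal (oneInflated (fBin K β₀ (Z a)) ω₀ (k + 2))
        * (ENNReal.ofReal (piLog η₀ (ScoreAux.xi p q (Z a)) (k + 2))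
          * ENNReal.ofReal (ScoreAux.Af p q K β₀ η₀ (Z a)))) := by
    intro k
    refine Measurable.fun_mul ?_ (Measurable.fun_mul ?_ ?_)
    · exact ENNReal.measurable_ofReal.comp
        (((ScoreAux.continuous_oneInflated β₀ ω₀ (k + 2)).measurable).comp hZm)
    · exact ENNReal.measurable_ofReal.comp
        ((((ScoreAux.continuous_piLog η₀ (k + 2)).comp
          ScoreAux.continuous_xi).measurable).comp hZm)
    · exact hW₁m.comp hZm
  have hl1 : ∫⁻ a, ENNReal.ofReal (F₁ a) ∂P
      = ∫⁻ a, ENNReal.ofReal (ScoreAux.u1 p q K β₀ η₀ ω₀ (Z a)) ∂P := by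
    rw [hind1, lintegral_indicator (hER.inter hmeas2), hun,
      lintegral_iUnion (fun k => hER.inter (hSk (k + 2))) hdisj]
    have hstep : ∀ k : ℕ, ∫⁻ a in {a | R a = 1} ∩ {a | D a = k + 2},
          ENNReal.ofReal (ScoreAux.Af p q K β₀ η₀ (Z a)) ∂P
        = ∫⁻ a, ENNReal.ofReal (oneInflated (fBin K β₀ (Z a)) ω₀ (k + 2))
            * (ENNReal.ofReal (piLog η₀ (ScoreAux.xi p q (Z a)) (k + 2))
              * ENNReal.ofReal (ScoreAux.Af p q K β₀ η₀ (Z a))) ∂P :=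
      fun k => stepC (k + 2) _ hW₁m
    rw [tsum_congr hstep, ← lintegral_tsum (fun k => (htermm k).aemeasurable)]
    refine lintegral_congr fun a => ?_
    have h1 : ∀ k : ℕ, ENNReal.ofReal (oneInflated (fBin K β₀ (Z a)) ω₀ (k + 2))
          * (ENNReal.ofReal (piLog η₀ (ScoreAux.xi p q (Z a)) (k + 2))
            * ENNReal.ofReal (ScoreAux.Af p q K β₀ η₀ (Z a)))
        = ENNReal.ofReal (oneInflated (fBin K β₀ (Z a)) ω₀ (k + 2)
            * (piLog η₀ (ScoreAux.xi p q (Z a)) (k + 2)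
              * ScoreAux.Af p q K β₀ η₀ (Z a))) := fun k => by
      rw [ENNReal.ofReal_mul (ScoreAux.oneInflated_nonneg β₀ (Z a) hω (k + 2)),
        ENNReal.ofReal_mul (ScoreAux.piLog_pos η₀ _ (k + 2)).le]
    rw [tsum_congr h1, ← ENNReal.ofReal_tsum_of_nonneg
        (fun k => mul_nonneg (ScoreAux.oneInflated_nonneg β₀ (Z a) hω (k + 2))
          (mul_nonneg (ScoreAux.piLog_pos η₀ _ (k + 2)).le
            (ScoreAux.Af_pos β₀ η₀ hK (Z a)).le))
        (ScoreAux.summable_terms β₀ η₀ hK ω₀ (Z a)),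
      ScoreAux.tsum_u1 β₀ η₀ hK ω₀ (Z a)]
  have hu1m : Measurable (fun a => ScoreAux.u1 p q K β₀ η₀ ω₀ (Z a)) :=
    ((ScoreAux.continuous_u1 β₀ η₀ hK ω₀).measurable).comp hZm
  have hu10 : ∀ a, 0 ≤ ScoreAux.u1 p q K β₀ η₀ ω₀ (Z a) :=
    fun a => ScoreAux.u1_nonneg β₀ η₀ hK hω (Z a)
  have hu1int : Integrable (fun a => ScoreAux.u1 p q K β₀ η₀ ω₀ (Z a)) P := by
    refine ⟨hu1m.aestronglyMeasurable, ?_⟩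
    rw [hasFiniteIntegral_iff_ofReal (Filter.Eventually.of_forall hu10), ← hl1,
      ← hasFiniteIntegral_iff_ofReal (Filter.Eventually.of_forall hF₁0)]
    exact hF1int.2
  have hIF1 : ∫ a, F₁ a ∂P = ∫ a, ScoreAux.u1 p q K β₀ η₀ ω₀ (Z a) ∂P := by
    rw [integral_eq_lintegral_of_nonneg_ae (Filter.Eventually.of_forall hF₁0)
        hF1int.aestronglyMeasurable,
      integral_eq_lintegral_of_nonneg_ae (Filter.Eventually.of_forall hu10)
        hu1m.aestronglyMeasurable, hl1]
  -- assemble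
  have hIG : ∫ a, (F₁ a - F₂ a) ∂P
      = (ω₀ - 1) * ∫ a, ScoreAux.cf p q K β₀ η₀ (Z a) ∂P := by
    calc ∫ a, (F₁ a - F₂ a) ∂P
        = (∫ a, F₁ a ∂P) - ∫ a, F₂ a ∂P := integral_sub hF1int hF2int
      _ = (∫ a, ScoreAux.u1 p q K β₀ η₀ ω₀ (Z a) ∂P)
          - ∫ a, ScoreAux.u2 p q K β₀ η₀ ω₀ (Z a) ∂P := by rw [hIF1, hIF2]
      _ = ∫ a, (ScoreAux.u1 p q K β₀ η₀ ω₀ (Z a)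
          - ScoreAux.u2 p q K β₀ η₀ ω₀ (Z a)) ∂P := (integral_sub hu1int hu2int).symm
      _ = ∫ a, (ω₀ - 1) * ScoreAux.cf p q K β₀ η₀ (Z a) ∂P :=
          integral_congr_ae (Filter.Eventually.of_forall fun a =>
            ScoreAux.key_id β₀ η₀ hK ω₀ (Z a))
      _ = (ω₀ - 1) * ∫ a, ScoreAux.cf p q K β₀ η₀ (Z a) ∂P := integral_const_mul _ _
  rw [hIG]
  rcases eq_or_lt_of_le hω.2 with hω1 | hlt
  · rw [hω1]
    norm_num
  · have hne : ω₀ - 1 ≠ 0 := by intro h; linarith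
    have hcint : Integrable (fun a => ScoreAux.cf p q K β₀ η₀ (Z a)) P := by
      have h := (hu1int.sub hu2int).const_mul ((ω₀ - 1)⁻¹)
      refine h.congr (Filter.Eventually.of_forall fun a => ?_)
      show (ω₀ - 1)⁻¹ * (ScoreAux.u1 p q K β₀ η₀ ω₀ (Z a)
        - ScoreAux.u2 p q K β₀ η₀ ω₀ (Z a)) = ScoreAux.cf p q K β₀ η₀ (Z a)
      rw [ScoreAux.key_id β₀ η₀ hK ω₀ (Z a), inv_mul_cancel_left₀ hne]
    have hpos : 0 < ∫ a, ScoreAux.cf p q K β₀ η₀ (Z a) ∂P := by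
      rw [integral_pos_iff_support_of_nonneg
        (fun a => (ScoreAux.cf_pos β₀ η₀ hK (Z a)).le) hcint]
      have hsupp : Function.support (fun a => ScoreAux.cf p q K β₀ η₀ (Z a)) = Set.univ :=
        Set.eq_univ_of_forall fun a => (ScoreAux.cf_pos β₀ η₀ hK (Z a)).ne'
      rw [hsupp, measure_univ]
      norm_num
    have hneg : (ω₀ - 1) * ∫ a, ScoreAux.cf p q K β₀ η₀ (Z a) ∂P < 0 :=
      mul_neg_of_neg_of_pos (by linarith) hpos
    exact ⟨hneg.le, fun h0 => absurd h0 hneg.ne, fun h1 => absurd h1 (by intro h; linarith)⟩
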